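/- Let Γ be a graph and D > 0. If the complex Γ^{2D} obtained from Γ by gluing disks to all edge-loops of length at most 2D is simply connected, then π₁(Γ) is generated by loops freely homotopic to loops of diameter at most D (i.e., Γ is D-simply connected). Conversely, if Γ is D-simply connected, then Γ^{2D+1} is simply connected. -/
import Mathlib


open SimpleGraph

variable {V : Type*}

/-- `D`-homotopy of walks in a graph `G`: the equivalence relation on walks with common
endpoints generated (congruently with respect to concatenation) by backtracking moves and by
identifying two walks whose difference is an edge-loop of length at most `D`.  Two closed walks
based at `a` are `D`-homotopic exactly when they represent the same element of
`π₁^D(G, a) = π₁(G^D, a)`, where `G^D` is obtained from `G` by gluing disks to all edge-loops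
of length at most `D`. -/
inductive DHomotopic (G : SimpleGraph V) (D : ℝ) : ∀ {u v : V}, G.Walk u v → G.Walk u v → Prop
  | refl {u v : V} (p : G.Walk u v) : DHomotopic G D p p
  | symm {u v : V} {p q : G.Walk u v} : DHomotopic G D p q → DHomotopic G D q p
  | trans {u v : V} {p q r : G.Walk u v} :
      DHomotopic G D p q → DHomotopic G D q r → DHomotopic G D p r
  | backtrack {u v : V} (h : G.Adj u v) :
      DHomotopic G D (Walk.nil : G.Walk u u) (Walk.cons h (Walk.cons h.symm Walk.nil))
  | small {u v : V} (p q : G.Walk u v) :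
      ((p.append q.reverse).length : ℝ) ≤ D → DHomotopic G D p q
  | congr {u v w x : V} {p p' : G.Walk v w} (r : G.Walk u v) (s : G.Walk w x) :
      DHomotopic G D p p' →
      DHomotopic G D (r.append (p.append s)) (r.append (p'.append s))

/-- `π₁^D(G, u)` is trivial: every closed walk based at `u` is `D`-homotopically trivial.
For a connected graph this says exactly that `G^D` is simply connected. -/
def DSimplyConnectedComplex (G : SimpleGraph V) (D : ℝ) : Prop :=
  ∀ (u : V) (p : G.Walk u u), DHomotopic G D p Walk.nil

/-- `G` is `D`-simply connected: `π₁(G)` is generated by loops freely homotopic to loops of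
diameter at most `D`, i.e. every closed walk is graph-homotopic to a concatenation of
conjugates `c · l · c⁻¹` of closed walks `l` of diameter at most `D`. -/
def DSimplyConnected (G : SimpleGraph V) (D : ℝ) : Prop :=
  ∀ (u : V) (p : G.Walk u u), ∃ L : List (G.Walk u u),
    DHomotopic G 0 p (L.foldr Walk.append Walk.nil) ∧
    ∀ w ∈ L, ∃ (v : V) (c : G.Walk u v) (l : G.Walk v v),
      w = c.append (l.append c.reverse) ∧
      ∀ x ∈ l.support, ∀ y ∈ l.support, (G.dist x y : ℝ) ≤ D

namespace MyAux

variable {G : SimpleGraph V} {D : ℝ}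

lemma mono {D' : ℝ} (hDD : D ≤ D') {u v : V} {p q : G.Walk u v}
    (h : DHomotopic G D p q) : DHomotopic G D' p q := by
  induction h with
  | refl p => exact .refl p
  | symm _ ih => exact ih.symm
  | trans _ _ ih1 ih2 => exact ih1.trans ih2
  | backtrack h => exact .backtrack h
  | small p q h => exact .small p q (h.trans hDD)
  | congr r s _ ih => exact .congr r s ih

lemma congr_right {u v w : V} {p p' : G.Walk u v} (s : G.Walk v w)
    (h : DHomotopic G D p p') : DHomotopic G D (p.append s) (p'.append s) := by
  simpa using DHomotopic.congr (Walk.nil : G.Walk u u) s h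

lemma congr_left {u v w : V} (r : G.Walk u v) {p p' : G.Walk v w}
    (h : DHomotopic G D p p') : DHomotopic G D (r.append p) (r.append p') := by
  simpa using DHomotopic.congr r (Walk.nil : G.Walk w w) h

lemma append_congr {u v w : V} {p p' : G.Walk u v} {q q' : G.Walk v w}
    (h1 : DHomotopic G D p p') (h2 : DHomotopic G D q q') :
    DHomotopic G D (p.append q) (p'.append q') :=
  (congr_right q h1).trans (congr_left p' h2)

lemma cancel {u v : V} (p : G.Walk u v) :
    DHomotopic G D (p.append p.reverse) Walk.nil := by
  induction p with
  | nil => exact .refl _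
  | cons h q ih =>
    refine DHomotopic.trans ?_ (DHomotopic.backtrack h).symm
    have h1 := DHomotopic.congr (Walk.cons h Walk.nil) (Walk.cons h.symm Walk.nil) ih
    simpa [← Walk.append_assoc] using h1

lemma cancel' {u v : V} (p : G.Walk u v) :
    DHomotopic G D (p.reverse.append p) Walk.nil := by
  simpa using cancel (D := D) p.reverse

lemma splice {u v z w : V} (a : G.Walk u v) (m : G.Walk v z) (b : G.Walk v w) :
    DHomotopic G D (a.append b) ((a.append m).append (m.reverse.append b)) := by
  have h := DHomotopic.congr (D := D) a b ((cancel (D := D) m).symm)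
  simpa [← Walk.append_assoc] using h

lemma rev {u v : V} {p q : G.Walk u v} (h : DHomotopic G D p q) :
    DHomotopic G D p.reverse q.reverse := by
  induction h with
  | refl p => exact .refl _
  | symm _ ih => exact ih.symm
  | trans _ _ ih1 ih2 => exact ih1.trans ih2
  | backtrack h => simpa using DHomotopic.backtrack (D := D) h
  | @small a b p q hle =>
    refine DHomotopic.small _ _ ?_
    have : ((p.reverse.append q.reverse.reverse).length : ℝ)
        = ((p.append q.reverse).length : ℝ) := by
      simp [Walk.length_append]
    rw [this]; exact hle
  | congr r s _ ih =>
    have := DHomotopic.congr s.reverse r.reverse ih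
    simpa [Walk.reverse_append, ← Walk.append_assoc] using this


def wprod {G : SimpleGraph V} {u : V} (L : List (G.Walk u u)) : G.Walk u u :=
  L.foldr Walk.append Walk.nil

lemma foldr_base {u : V} (L : List (G.Walk u u)) (x : G.Walk u u) :
    List.foldr Walk.append x L = (wprod L).append x := by
  induction L with
  | nil => simp [wprod]
  | cons a L ih =>
    show a.append (List.foldr Walk.append x L) = (a.append (wprod L)).append x
    rw [ih, Walk.append_assoc]

lemma wprod_append {u : V} (L₁ L₂ : List (G.Walk u u)) :
    wprod (L₁ ++ L₂) = (wprod L₁).append (wprod L₂) := by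
  show List.foldr Walk.append Walk.nil (L₁ ++ L₂) = _
  rw [List.foldr_append]
  exact foldr_base L₁ (wprod L₂)

lemma wprod_reverse {u : V} (L : List (G.Walk u u)) :
    (wprod L).reverse = wprod (L.reverse.map Walk.reverse) := by
  induction L with
  | nil => simp [wprod]
  | cons w L ih =>
    show (w.append (wprod L)).reverse = _
    rw [Walk.reverse_append, ih, List.reverse_cons, List.map_append, wprod_append]
    simp [wprod]

def IsGoodLoop (G : SimpleGraph V) (D : ℝ) (u : V) (w : G.Walk u u) : Prop :=
  ∃ (v : V) (c : G.Walk u v) (l : G.Walk v v),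
    w = c.append (l.append c.reverse) ∧
    ∀ x ∈ l.support, ∀ y ∈ l.support, (G.dist x y : ℝ) ≤ D

def Good (G : SimpleGraph V) (D : ℝ) {u : V} (p : G.Walk u u) : Prop :=
  ∃ L : List (G.Walk u u), DHomotopic G 0 p (wprod L) ∧ ∀ w ∈ L, IsGoodLoop G D u w

lemma good_of_dh {u : V} {p q : G.Walk u u} (h : DHomotopic G 0 p q)
    (hq : Good G D q) : Good G D p := by
  obtain ⟨L, hL, hm⟩ := hq; exact ⟨L, h.trans hL, hm⟩

lemma good_nil {u : V} {p : G.Walk u u} (h : DHomotopic G 0 p Walk.nil) : Good G D p :=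
  ⟨[], h, by simp⟩

lemma good_append {u : V} {p q : G.Walk u u} (hp : Good G D p) (hq : Good G D q) :
    Good G D (p.append q) := by
  obtain ⟨L₁, h₁, hm₁⟩ := hp
  obtain ⟨L₂, h₂, hm₂⟩ := hq
  refine ⟨L₁ ++ L₂, ?_, ?_⟩
  · rw [wprod_append]; exact append_congr h₁ h₂
  · intro w hw
    rcases List.mem_append.1 hw with h | h
    exacts [hm₁ w h, hm₂ w h]

lemma goodloop_rev {u : V} {w : G.Walk u u} (h : IsGoodLoop G D u w) :
    IsGoodLoop G D u w.reverse := by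
  obtain ⟨v, c, l, rfl, hd⟩ := h
  refine ⟨v, c, l.reverse, by simp [Walk.reverse_append, ← Walk.append_assoc], ?_⟩
  intro x hx y hy
  rw [Walk.support_reverse, List.mem_reverse] at hx hy
  exact hd x hx y hy

lemma good_rev {u : V} {p : G.Walk u u} (h : Good G D p) : Good G D p.reverse := by
  obtain ⟨L, hL, hm⟩ := h
  refine ⟨L.reverse.map Walk.reverse, ?_, ?_⟩
  · rw [← wprod_reverse]; exact rev hL
  · intro w hw
    simp only [List.mem_map, List.mem_reverse] at hw
    obtain ⟨w₀, h₀, rfl⟩ := hw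
    exact goodloop_rev (hm w₀ h₀)

lemma conj_prod {u v : V} (r : G.Walk u v) (L : List (G.Walk v v)) :
    DHomotopic G 0 (r.append ((wprod L).append r.reverse))
      (wprod (L.map fun w => r.append (w.append r.reverse))) := by
  induction L with
  | nil => simpa [wprod] using cancel (D := (0:ℝ)) r
  | cons w L ih =>
    refine DHomotopic.trans ?_ (append_congr (DHomotopic.refl (r.append (w.append r.reverse))) ih)
    have h1 := splice (D := (0:ℝ)) (r.append w) r.reverse ((wprod L).append r.reverse)
    rw [Walk.reverse_reverse] at h1
    show DHomotopic G 0 (r.append (((w.append (wprod L))).append r.reverse)) _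
    simpa [← Walk.append_assoc] using h1

lemma good_conj {u v : V} (r : G.Walk u v) {Y : G.Walk v v} (h : Good G D Y) :
    Good G D (r.append (Y.append r.reverse)) := by
  obtain ⟨L, hL, hm⟩ := h
  refine ⟨L.map (fun w => r.append (w.append r.reverse)), ?_, ?_⟩
  · exact (DHomotopic.congr r r.reverse hL).trans (conj_prod r L)
  · intro w hw
    simp only [List.mem_map] at hw
    obtain ⟨w₀, h₀, rfl⟩ := hw
    obtain ⟨z, c, l, rfl, hd⟩ := hm w₀ h₀
    exact ⟨z, r.append c, l, by simp [Walk.reverse_append, ← Walk.append_assoc], hd⟩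


lemma loop_dist {u : V} (p : G.Walk u u) {x y : V} (hx : x ∈ p.support)
    (hy : y ∈ p.support) : 2 * G.dist x y ≤ p.length := by
  classical
  have hspec := Walk.take_spec p hx
  set p₁ := p.takeUntil x hx with hp₁
  set p₂ := p.dropUntil x hx with hp₂
  have hlen : p₁.length + p₂.length = p.length := by
    rw [← Walk.length_append, hspec]
  rw [← hspec] at hy
  rcases (Walk.mem_support_append_iff _ _).1 hy with hy1 | hy2
  · have hsplit : (p₁.takeUntil y hy1).length + (p₁.dropUntil y hy1).length = p₁.length := by
      rw [← Walk.length_append, Walk.take_spec]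
    have d1 : G.dist x y ≤ (p₂.append (p₁.takeUntil y hy1)).length := dist_le _
    have d2 : G.dist y x ≤ (p₁.dropUntil y hy1).length := dist_le _
    rw [Walk.length_append] at d1
    rw [dist_comm] at d2
    omega
  · have hsplit : (p₂.takeUntil y hy2).length + (p₂.dropUntil y hy2).length = p₂.length := by
      rw [← Walk.length_append, Walk.take_spec]
    have d1 : G.dist x y ≤ (p₂.takeUntil y hy2).length := dist_le _
    have d2 : G.dist y x ≤ ((p₂.dropUntil y hy2).append p₁).length := dist_le _
    rw [Walk.length_append] at d2
    rw [dist_comm] at d2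
    omega

lemma key {u v : V} {p q : G.Walk u v} (h : DHomotopic G (2 * D) p q) :
    Good G D (p.append q.reverse) := by
  induction h with
  | refl p => exact good_nil (cancel p)
  | @symm _ _ p q _ ih =>
    have := good_rev ih
    rw [Walk.reverse_append, Walk.reverse_reverse] at this
    exact this
  | @trans _ _ p q r _ _ ih1 ih2 =>
    refine good_of_dh ?_ (good_append ih1 ih2)
    have hs := splice (D := (0:ℝ)) p q.reverse r.reverse
    rwa [Walk.reverse_reverse] at hs
  | backtrack h =>
    refine good_nil ?_
    simpa using rev (DHomotopic.backtrack (D := (0:ℝ)) h).symm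
  | @small a b p q hle =>
    refine ⟨[p.append q.reverse], ?_, ?_⟩
    · show DHomotopic G 0 _ ((p.append q.reverse).append Walk.nil)
      rw [Walk.append_nil]; exact .refl _
    · intro w hw
      simp only [List.mem_singleton] at hw
      subst hw
      refine ⟨a, Walk.nil, p.append q.reverse, by simp, ?_⟩
      intro a ha b hb
      have h2 := loop_dist (p.append q.reverse) ha hb
      have : (2 * G.dist a b : ℝ) ≤ ((p.append q.reverse).length : ℝ) := by
        exact_mod_cast h2
      linarith
  | @congr _ _ _ _ p p' r s _ ih =>
    refine good_of_dh ?_ (good_conj r ih)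
    have hs := (splice (D := (0:ℝ)) (r.append p) s (p'.reverse.append r.reverse)).symm
    simpa [Walk.reverse_append, ← Walk.append_assoc] using hs


lemma small_loop_trivial (hG : G.Connected) (hD : 0 < D) {u v w : V} (l : G.Walk v w) :
    ∀ (c : G.Walk u v) (c' : G.Walk u w), (c.length : ℝ) ≤ D → (c'.length : ℝ) ≤ D →
      (∀ x ∈ l.support, (G.dist u x : ℝ) ≤ D) →
      DHomotopic G (2 * D + 1) ((c.append l).append c'.reverse) Walk.nil := by
  induction l with
  | nil =>
    intro c c' hc hc' _
    refine DHomotopic.small _ _ ?_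
    simp only [Walk.append_nil, Walk.length_append, Walk.length_reverse, Walk.length_nil]
    push_cast
    linarith
  | @cons a b w' hadj ltl ih =>
    intro c c' hc hc' hsup
    obtain ⟨g, hg⟩ := hG.exists_walk_length_eq_dist u b
    have hb : (G.dist u b : ℝ) ≤ D := by
      refine hsup b ?_
      simp [Walk.support_cons]
    have hgl : (g.length : ℝ) ≤ D := by rw [hg]; exact hb
    have hIH := ih g c' hgl hc' (fun x hx => hsup x (by simp [Walk.support_cons, hx]))
    have htri : DHomotopic G (2 * D + 1)
        ((c.append (Walk.cons hadj Walk.nil)).append g.reverse) Walk.nil := by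
      refine DHomotopic.small _ _ ?_
      simp only [Walk.append_nil, Walk.length_append, Walk.length_reverse,
        Walk.length_cons, Walk.length_nil]
      push_cast
      linarith
    have hs := splice (D := 2 * D + 1) (c.append (Walk.cons hadj Walk.nil)) g.reverse
        (ltl.append c'.reverse)
    rw [Walk.reverse_reverse] at hs
    rw [← Walk.append_assoc] at hIH
    have hfin := hs.trans (append_congr htri hIH)
    simpa [← Walk.append_assoc] using hfin

lemma prod_trivial (hG : G.Connected) (hD : 0 < D) {u : V} :
    ∀ (L : List (G.Walk u u)), (∀ w ∈ L, IsGoodLoop G D u w) →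
      DHomotopic G (2 * D + 1) (wprod L) Walk.nil := by
  intro L
  induction L with
  | nil => intro _; exact .refl _
  | cons w L ih =>
    intro hmem
    obtain ⟨z, c, l, hw, hd⟩ := hmem w (by simp)
    have hl : DHomotopic G (2 * D + 1) l Walk.nil := by
      have := small_loop_trivial hG hD l (Walk.nil : G.Walk z z) (Walk.nil : G.Walk z z)
        (by simp; linarith) (by simp; linarith)
        (fun x hx => hd z l.start_mem_support x hx)
      simpa using this
    have hwnil : DHomotopic G (2 * D + 1) w Walk.nil := by
      rw [hw]
      refine (DHomotopic.congr c c.reverse hl).trans ?_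
      simpa using cancel (D := 2 * D + 1) c
    have hL := ih (fun w' hw' => hmem w' (by simp [hw']))
    have := append_congr hwnil hL
    simpa [wprod] using this

end MyAux

/-- **Lemma.** Let `Γ` be a (connected) graph, `D > 0`.  If `Γ^{2D}` is simply connected then
`Γ` is `D`-simply connected; conversely if `Γ` is `D`-simply connected then `Γ^{2D+1}` is
simply connected. -/
theorem csc_vs_coarse_pi1 (G : SimpleGraph V) (hG : G.Connected) (D : ℝ) (hD : 0 < D) :
    (DSimplyConnectedComplex G (2 * D) → DSimplyConnected G D) ∧
    (DSimplyConnected G D → DSimplyConnectedComplex G (2 * D + 1)) := by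
  constructor
  · intro hcx u p
    have h := MyAux.key (hcx u p)
    rw [Walk.reverse_nil, Walk.append_nil] at h
    obtain ⟨L, hL, hm⟩ := h
    exact ⟨L, hL, hm⟩
  · intro hsc u p
    obtain ⟨L, hL, hm⟩ := hsc u p
    have h1 : DHomotopic G (2 * D + 1) p (MyAux.wprod L) :=
      MyAux.mono (by linarith) hL
    exact h1.trans (MyAux.prod_trivial hG hD L hm)
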